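/- Let G be a nontrivial connected graph of order n with maximum degree Δ(G). Then max{Δ(G), diam(G)} ≤ prc(G) ≤ χ'(G) + (n - 1 - Δ(G)); in particular prc(G) ≤ n if χ'(G) = Δ(G) + 1 and prc(G) ≤ n - 1 if χ'(G) = Δ(G). -/

import Mathlib

open SimpleGraph

variable {V : Type*}

/-- A walk is rainbow under edge colouring `c` if its edges receive pairwise distinct colours. -/
def SimpleGraph.Walk.IsRainbow {G : SimpleGraph V} {u v : V} (c : Sym2 V → ℕ) (p : G.Walk u v) :
    Prop :=
  (p.edges.map c).Nodup

/-- `G` is rainbow connected under the edge colouring `c`: any two vertices are joined by a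
rainbow path. -/
def SimpleGraph.RainbowConnected (G : SimpleGraph V) (c : Sym2 V → ℕ) : Prop :=
  ∀ u v : V, ∃ p : G.Walk u v, p.IsPath ∧ p.IsRainbow c

/-- `c` is a proper edge colouring of `G`: adjacent edges receive distinct colours. -/
def SimpleGraph.IsProperEdgeColoring (G : SimpleGraph V) (c : Sym2 V → ℕ) : Prop :=
  ∀ ⦃u v w : V⦄, G.Adj u v → G.Adj u w → v ≠ w → c s(u, v) ≠ c s(u, w)

/-- The colouring `c` uses at most `k` colours on the edges of `G`. -/
def SimpleGraph.ColorsLE (G : SimpleGraph V) (c : Sym2 V → ℕ) (k : ℕ) : Prop :=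
  ∀ e ∈ G.edgeSet, c e < k

/-- The rainbow connection number `rc(G)`. -/
noncomputable def SimpleGraph.rcNumber (G : SimpleGraph V) : ℕ :=
  sInf {k | ∃ c : Sym2 V → ℕ, G.ColorsLE c k ∧ G.RainbowConnected c}

/-- The proper rainbow connection number `prc(G)`. -/
noncomputable def SimpleGraph.prcNumber (G : SimpleGraph V) : ℕ :=
  sInf {k | ∃ c : Sym2 V → ℕ, G.ColorsLE c k ∧ G.IsProperEdgeColoring c ∧ G.RainbowConnected c}

/-- The chromatic index `χ'(G)`. -/
noncomputable def SimpleGraph.chromaticIndex (G : SimpleGraph V) : ℕ :=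
  sInf {k | ∃ c : Sym2 V → ℕ, G.ColorsLE c k ∧ G.IsProperEdgeColoring c}

lemma exists_parent' {V : Type*} {G : SimpleGraph V} (hconn : G.Connected) (v : V) :
    ∃ parent : V → V, ∀ u, u ≠ v → G.Adj u (parent u) ∧ G.dist (parent u) v < G.dist u v := by
  have h : ∀ u : V, ∃ w : V, u ≠ v → G.Adj u w ∧ G.dist w v < G.dist u v := by
    intro u
    by_cases hu : u = v
    · exact ⟨u, fun h => absurd hu h⟩
    · have hpos : 0 < G.dist u v := hconn.pos_dist_of_ne hu
      obtain ⟨p, hp⟩ := hconn.exists_walk_length_eq_dist u v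
      cases p with
      | nil => simp at hp hpos
      | cons hadj q =>
          refine ⟨_, fun _ => ⟨hadj, ?_⟩⟩
          have hq := SimpleGraph.dist_le q
          simp [SimpleGraph.Walk.length_cons] at hp
          omega
  choose parent hp using h
  exact ⟨parent, fun u hu => hp u hu⟩

theorem stmt0 {V : Type*} [Fintype V] [DecidableEq V] (G : SimpleGraph V) [DecidableRel G.Adj]
    (hconn : G.Connected) (hn : 2 ≤ Fintype.card V) :
    (max G.maxDegree G.diam ≤ G.prcNumber ∧
      G.prcNumber ≤ G.chromaticIndex + (Fintype.card V - 1 - G.maxDegree)) ∧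
    (G.chromaticIndex = G.maxDegree + 1 → G.prcNumber ≤ Fintype.card V) ∧
    (G.chromaticIndex = G.maxDegree → G.prcNumber ≤ Fintype.card V - 1) := by
  classical
  have hVne : Nonempty V := Fintype.card_pos_iff.mp (by omega)
  -- the chromatic index set is nonempty, so the infimum is attained
  have hCne : {k | ∃ c : Sym2 V → ℕ, G.ColorsLE c k ∧ G.IsProperEdgeColoring c}.Nonempty := by
    refine ⟨Fintype.card (Sym2 V), fun e => ((Fintype.equivFin (Sym2 V)) e : ℕ),
      fun e _ => ((Fintype.equivFin (Sym2 V)) e).2, ?_⟩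
    intro a b b' hab hab' hbb' hcc
    have h1 : (Fintype.equivFin (Sym2 V)) s(a, b) = (Fintype.equivFin (Sym2 V)) s(a, b') :=
      Fin.val_injective hcc
    exact hbb' (Sym2.congr_right.mp ((Fintype.equivFin (Sym2 V)).injective h1))
  obtain ⟨c0, hc0le, hc0prop⟩ :
      ∃ c0 : Sym2 V → ℕ, G.ColorsLE c0 G.chromaticIndex ∧ G.IsProperEdgeColoring c0 :=
    Nat.sInf_mem hCne
  obtain ⟨v, hv⟩ := G.exists_maximal_degree_vertex
  obtain ⟨par, hpar⟩ := exists_parent' hconn v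
  set n := Fintype.card V with hndef
  set χ := G.chromaticIndex with hχdef
  set S : Finset V := Finset.univ.filter (fun u => u ≠ v ∧ ¬ G.Adj v u) with hSdef
  have hSmem : ∀ u : V, u ∈ S ↔ u ≠ v ∧ ¬ G.Adj v u := by
    intro u; simp [hSdef]
  have hScard : S.card = n - 1 - G.degree v := by
    have hcompl : Sᶜ = insert v (G.neighborFinset v) := by
      ext u
      simp only [Finset.mem_compl, hSmem, Finset.mem_insert, SimpleGraph.mem_neighborFinset]
      tauto
    have h1 : Sᶜ.card = G.degree v + 1 := by
      rw [hcompl, Finset.card_insert_of_notMem (by simp), SimpleGraph.card_neighborFinset_eq_degree]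
    have h2 : Sᶜ.card = n - S.card := by
      rw [Finset.card_compl]
    have h3 : S.card ≤ n := Finset.card_le_univ S
    omega
  set f : V → ℕ := fun u => S.toList.idxOf u with hfdef
  have hflt : ∀ u ∈ S, f u < S.card := by
    intro u hu
    have := List.idxOf_lt_length_iff.2 ((Finset.mem_toList).mpr hu)
    rwa [Finset.length_toList] at this
  have hfinj : ∀ u1 ∈ S, ∀ u2 ∈ S, f u1 = f u2 → u1 = u2 := by
    intro u1 h1 u2 h2 h
    exact (List.idxOf_inj ((Finset.mem_toList).mpr h1)).1 h
  set Rec : Sym2 V → Prop := fun e => ∃ u, u ∈ S ∧ e = s(u, par u) with hRecdef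
  have hRecUniq : ∀ u1 ∈ S, ∀ u2 ∈ S, s(u1, par u1) = s(u2, par u2) → u1 = u2 := by
    intro u1 h1 u2 h2 he
    have hu1 := (hSmem u1).mp h1
    have hu2 := (hSmem u2).mp h2
    rcases Sym2.eq_iff.mp he with ⟨h, _⟩ | ⟨ha, hb⟩
    · exact h
    · have d1 := (hpar u1 hu1.1).2
      have d2 := (hpar u2 hu2.1).2
      rw [← ha] at d2
      rw [hb] at d1
      omega
  set c : Sym2 V → ℕ := fun e => if h : Rec e then χ + f h.choose else c0 e with hcdef
  have hcRec : ∀ (e : Sym2 V) (h : Rec e),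
      c e = χ + f h.choose ∧ h.choose ∈ S ∧ e = s(h.choose, par h.choose) :=
    fun e h => ⟨dif_pos h, h.choose_spec.1, h.choose_spec.2⟩
  have hcOld : ∀ e : Sym2 V, ¬ Rec e → c e = c0 e := fun e h => dif_neg h
  -- properness
  have hcprop : G.IsProperEdgeColoring c := by
    intro a b b' hab hab' hbb' hcc
    by_cases h1 : Rec s(a, b) <;> by_cases h2 : Rec s(a, b')
    · obtain ⟨hv1, hs1, heq1⟩ := hcRec _ h1
      obtain ⟨hv2, hs2, heq2⟩ := hcRec _ h2
      rw [hv1, hv2] at hcc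
      have hu := hfinj _ hs1 _ hs2 (Nat.add_left_cancel hcc)
      have : s(a, b) = s(a, b') := by rw [heq1, heq2, hu]
      exact hbb' (Sym2.congr_right.mp this)
    · have l1 : χ ≤ c s(a, b) := by rw [(hcRec _ h1).1]; omega
      have l2 : c s(a, b') < χ := by
        rw [hcOld _ h2]; exact hc0le _ (G.mem_edgeSet.mpr hab')
      omega
    · have l1 : χ ≤ c s(a, b') := by rw [(hcRec _ h2).1]; omega
      have l2 : c s(a, b) < χ := by
        rw [hcOld _ h1]; exact hc0le _ (G.mem_edgeSet.mpr hab)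
      omega
    · rw [hcOld _ h1, hcOld _ h2] at hcc
      exact hc0prop hab hab' hbb' hcc
  -- colour bound
  have hcle : G.ColorsLE c (χ + (n - 1 - G.maxDegree)) := by
    intro e he
    by_cases h : Rec e
    · obtain ⟨hv1, hs, _⟩ := hcRec e h
      have hlt := hflt _ hs
      rw [hv1]
      have hdeg : G.maxDegree = G.degree v := hv
      omega
    · rw [hcOld e h]
      have := hc0le e he
      omega
  -- key injectivity on good edges
  have hInj : ∀ e1 ∈ G.edgeSet, (Rec e1 ∨ v ∈ e1) → ∀ e2 ∈ G.edgeSet, (Rec e2 ∨ v ∈ e2) →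
      c e1 = c e2 → e1 = e2 := by
    intro e1 he1 hp1 e2 he2 hp2 hcc
    by_cases h1 : Rec e1 <;> by_cases h2 : Rec e2
    · obtain ⟨hv1, hs1, heq1⟩ := hcRec _ h1
      obtain ⟨hv2, hs2, heq2⟩ := hcRec _ h2
      rw [hv1, hv2] at hcc
      have hu := hfinj _ hs1 _ hs2 (Nat.add_left_cancel hcc)
      rw [heq1, heq2, hu]
    · have l1 : χ ≤ c e1 := by rw [(hcRec _ h1).1]; omega
      have l2 : c e2 < χ := by rw [hcOld _ h2]; exact hc0le _ he2
      omega
    · have l1 : χ ≤ c e2 := by rw [(hcRec _ h2).1]; omega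
      have l2 : c e1 < χ := by rw [hcOld _ h1]; exact hc0le _ he1
      omega
    · obtain ⟨a, ha⟩ := Sym2.mem_iff_exists.mp (hp1.resolve_left h1)
      obtain ⟨b, hb⟩ := Sym2.mem_iff_exists.mp (hp2.resolve_left h2)
      subst ha; subst hb
      have hadj1 : G.Adj v a := G.mem_edgeSet.mp he1
      have hadj2 : G.Adj v b := G.mem_edgeSet.mp he2
      rw [hcOld _ h1, hcOld _ h2] at hcc
      by_cases hab : a = b
      · rw [hab]
      · exact absurd hcc (hc0prop hadj1 hadj2 hab)
  -- good walks to v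
  have hW : ∀ (m : ℕ) (u : V), G.dist u v ≤ m →
      ∃ p : G.Walk u v, ∀ e ∈ p.edges, Rec e ∨ v ∈ e := by
    intro m
    induction m with
    | zero =>
        intro u h
        have hd : G.dist u v = 0 := Nat.le_zero.mp h
        have : u = v := (hconn.dist_eq_zero_iff).mp hd
        subst this
        exact ⟨SimpleGraph.Walk.nil, by simp⟩
    | succ m ih =>
        intro u h
        by_cases hu : u = v
        · subst hu; exact ⟨SimpleGraph.Walk.nil, by simp⟩
        · have hpadj := (hpar u hu).1
          have hpd := (hpar u hu).2
          obtain ⟨q, hq⟩ := ih (par u) (by omega)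
          refine ⟨SimpleGraph.Walk.cons hpadj q, ?_⟩
          intro e he
          rw [SimpleGraph.Walk.edges_cons, List.mem_cons] at he
          rcases he with rfl | he
          · by_cases hS : G.Adj v u
            · have hd1 : G.dist u v = 1 := SimpleGraph.dist_eq_one_iff_adj.mpr hS.symm
              have hd0 : G.dist (par u) v = 0 := by omega
              have hpv : par u = v := (hconn.dist_eq_zero_iff).mp hd0
              right; rw [hpv]; simp
            · left; exact ⟨u, (hSmem u).mpr ⟨hu, hS⟩, rfl⟩
          · exact hq e he
  -- rainbow connectedness
  have hRC : G.RainbowConnected c := by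
    intro u w
    obtain ⟨p, hp⟩ := hW _ u le_rfl
    obtain ⟨q, hq⟩ := hW _ w le_rfl
    set r : G.Walk u w := p.append q.reverse with hrdef
    have hre : ∀ e ∈ r.edges, Rec e ∨ v ∈ e := by
      intro e he
      rw [hrdef, SimpleGraph.Walk.edges_append, List.mem_append] at he
      rcases he with h | h
      · exact hp e h
      · rw [SimpleGraph.Walk.edges_reverse, List.mem_reverse] at h
        exact hq e h
    refine ⟨r.bypass, r.bypass_isPath, ?_⟩
    refine List.Nodup.map_on ?_ r.bypass_isPath.edges_nodup
    intro e1 h1 e2 h2 hcc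
    have h1' := r.edges_bypass_subset h1
    have h2' := r.edges_bypass_subset h2
    exact hInj e1 (r.edges_subset_edgeSet h1') (hre e1 h1')
      e2 (r.edges_subset_edgeSet h2') (hre e2 h2') hcc
  -- upper bound
  have hprcle : G.prcNumber ≤ χ + (n - 1 - G.maxDegree) :=
    Nat.sInf_le ⟨c, hcle, hcprop, hRC⟩
  -- lower bound
  have hlow : ∀ k ∈ {k | ∃ c' : Sym2 V → ℕ,
      G.ColorsLE c' k ∧ G.IsProperEdgeColoring c' ∧ G.RainbowConnected c'},
      max G.maxDegree G.diam ≤ k := by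
    rintro k ⟨c', hle', hprop', hrc'⟩
    refine max_le ?_ ?_
    · rw [hv]
      have hmaps : ∀ w ∈ G.neighborFinset v, c' s(v, w) ∈ Finset.range k := by
        intro w hw
        exact Finset.mem_range.mpr (hle' _ (G.mem_edgeSet.mpr
          ((SimpleGraph.mem_neighborFinset G v w).mp hw)))
      have hinj' : ∀ w1 ∈ G.neighborFinset v, ∀ w2 ∈ G.neighborFinset v,
          c' s(v, w1) = c' s(v, w2) → w1 = w2 := by
        intro w1 h1 w2 h2 hcc
        by_contra hne
        exact hprop' ((SimpleGraph.mem_neighborFinset G v w1).mp h1)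
          ((SimpleGraph.mem_neighborFinset G v w2).mp h2) hne hcc
      have := Finset.card_le_card_of_injOn (fun w => c' s(v, w)) hmaps
        (fun w1 h1 w2 h2 h => hinj' w1 h1 w2 h2 h)
      rwa [Finset.card_range, SimpleGraph.card_neighborFinset_eq_degree] at this
    · obtain ⟨x, y, hxy⟩ := G.exists_dist_eq_diam
      rw [← hxy]
      obtain ⟨p, hp, hrb⟩ := hrc' x y
      have h1 : G.dist x y ≤ p.length := SimpleGraph.dist_le p
      have hsub : (p.edges.map c').toFinset ⊆ Finset.range k := by
        intro m hm
        rw [List.mem_toFinset, List.mem_map] at hm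
        obtain ⟨e, he, rfl⟩ := hm
        exact Finset.mem_range.mpr (hle' e (p.edges_subset_edgeSet he))
      have hcard := Finset.card_le_card hsub
      rw [List.toFinset_card_of_nodup hrb, Finset.card_range, List.length_map] at hcard
      have hlen : p.edges.length = p.length := p.length_edges
      omega
  have hlb : max G.maxDegree G.diam ≤ G.prcNumber :=
    le_csInf ⟨_, c, hcle, hcprop, hRC⟩ hlow
  have hdlt : G.maxDegree < n := hv ▸ G.degree_lt_card_verts v
  refine ⟨⟨hlb, hprcle⟩, ?_, ?_⟩
  · intro h
    omega
  · intro h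
    omega
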